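/- Let ζ : [0,∞) → ℂ be bounded and continuous, and let f : [0,∞) → ℂ be continuous with ∫₀^∞ e^{−νt} |f(t)| dt < ∞ for every ν > 1. Then there exists ν > 1 such that the unique continuous solution q of the Volterra equation q(t) + ∫₀^t 𝓘(t−τ) ζ(τ) q(τ) dτ = f(t) satisfies ∫₀^∞ e^{−νt} |q(t)| dt < ∞. -/

import Mathlib

open MeasureTheory

open Set Real ENNReal

/-- The Volterra function of order `-1`: `𝓘(t) = ∫₀^∞ t^(s-1)/Γ(s) ds`. -/
noncomputable def volterraI (t : ℝ) : ℝ :=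
  ∫ s in Set.Ioi (0 : ℝ), t ^ (s - 1) / Real.Gamma s

lemma measurable_Gamma : Measurable Real.Gamma := by
  have hS : (Set.range fun n : ℕ => -(n : ℝ)).Countable := Set.countable_range _
  apply measurable_of_restrict_of_restrict_compl hS.measurableSet
  · have : Countable (Set.range fun n : ℕ => -(n : ℝ)) := hS.to_subtype
    exact measurable_of_countable _
  · apply Continuous.measurable
    rw [← continuousOn_iff_continuous_restrict]
    intro s hs
    have h : ∀ m : ℕ, s ≠ -m := fun m hm => hs ⟨m, hm.symm⟩
    exact (Real.differentiableAt_Gamma h).continuousAt.continuousWithinAt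

lemma measurable_vkernel : Measurable (fun p : ℝ × ℝ => p.1 ^ (p.2 - 1) / Real.Gamma p.2) := by
  have h1 : Measurable fun p : ℝ × ℝ => p.1 ^ (p.2 - 1) := by measurability
  exact h1.div (measurable_Gamma.comp measurable_snd)

lemma measurable_volterraI : Measurable volterraI := by
  have := (measurable_vkernel.stronglyMeasurable).integral_prod_right'
    (ν := volume.restrict (Set.Ioi 0))
  exact this.measurable

lemma volterraI_nonneg {t : ℝ} (ht : 0 ≤ t) : 0 ≤ volterraI t :=
  setIntegral_nonneg measurableSet_Ioi fun s hs =>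
    div_nonneg (Real.rpow_nonneg ht _) (Real.Gamma_nonneg_of_nonneg (le_of_lt hs))

lemma ofReal_integral_le {α : Type*} [MeasurableSpace α] (μ : Measure α) (f : α → ℝ) :
    ENNReal.ofReal (∫ x, f x ∂μ) ≤ ∫⁻ x, ENNReal.ofReal (f x) ∂μ := by
  by_cases hf : Integrable f μ
  · have hmax : ∀ a : ℝ, ENNReal.ofReal (max a 0) = ENNReal.ofReal a := by
      intro a
      rcases le_total a 0 with h | h
      · rw [max_eq_right h, ENNReal.ofReal_of_nonpos h, ENNReal.ofReal_zero]
      · rw [max_eq_left h]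
    calc ENNReal.ofReal (∫ x, f x ∂μ) ≤ ENNReal.ofReal (∫ x, max (f x) 0 ∂μ) :=
          ENNReal.ofReal_le_ofReal
            (integral_mono hf hf.pos_part fun x => le_max_left _ _)
      _ = ∫⁻ x, ENNReal.ofReal (max (f x) 0) ∂μ :=
          ofReal_integral_eq_lintegral_ofReal hf.pos_part (ae_of_all _ fun x => le_max_right _ _)
      _ = ∫⁻ x, ENNReal.ofReal (f x) ∂μ := by simp_rw [hmax]
  · rw [integral_undef hf]; simp

lemma lintegral_exp_volterra_le {ν : ℝ} (hν : 1 < ν) :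
    ∫⁻ s in Set.Ioi (0 : ℝ), ENNReal.ofReal (Real.exp (-ν * s) * volterraI s)
      ≤ ENNReal.ofReal (1 / Real.log ν) := by
  have hν0 : (0 : ℝ) < ν := lt_trans one_pos hν
  have hlog : 0 < Real.log ν := Real.log_pos hν
  have hmeas : Measurable (Function.uncurry fun s r : ℝ =>
      ENNReal.ofReal (Real.exp (-ν * s) * (s ^ (r - 1) / Real.Gamma r))) := by
    exact ((Real.measurable_exp.comp (measurable_fst.const_mul (-ν))).mul
      measurable_vkernel).ennreal_ofReal
  calc ∫⁻ s in Set.Ioi (0 : ℝ), ENNReal.ofReal (Real.exp (-ν * s) * volterraI s)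
      ≤ ∫⁻ s in Set.Ioi (0 : ℝ), ∫⁻ r in Set.Ioi (0 : ℝ),
          ENNReal.ofReal (Real.exp (-ν * s) * (s ^ (r - 1) / Real.Gamma r)) := by
        refine lintegral_mono fun s => ?_
        rw [volterraI, ← integral_const_mul]
        exact ofReal_integral_le _ _
    _ = ∫⁻ r in Set.Ioi (0 : ℝ), ∫⁻ s in Set.Ioi (0 : ℝ),
          ENNReal.ofReal (Real.exp (-ν * s) * (s ^ (r - 1) / Real.Gamma r)) :=
        lintegral_lintegral_swap hmeas.aemeasurable
    _ ≤ ∫⁻ r in Set.Ioi (0 : ℝ), ENNReal.ofReal (Real.exp (-(Real.log ν) * r)) := by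
        refine lintegral_mono_ae ?_
        filter_upwards [self_mem_ae_restrict measurableSet_Ioi] with r hr
        have hr0 : (0 : ℝ) < r := hr
        have hint : IntegrableOn (fun s : ℝ => Real.exp (-ν * s) * (s ^ (r - 1) / Real.Gamma r))
            (Set.Ioi 0) := by
          have h1 := integrableOn_rpow_mul_exp_neg_mul_rpow
            (by linarith : (-1 : ℝ) < r - 1) (one_pos : (0 : ℝ) < 1) hν0
          refine IntegrableOn.congr_fun (h1.mul_const (1 / Real.Gamma r))
            (fun s hs => ?_) measurableSet_Ioi
          rw [Real.rpow_one]; ring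
        have hnn : 0 ≤ᵐ[volume.restrict (Set.Ioi 0)]
            fun s : ℝ => Real.exp (-ν * s) * (s ^ (r - 1) / Real.Gamma r) := by
          filter_upwards [self_mem_ae_restrict measurableSet_Ioi] with s hs
          have hs0 : (0 : ℝ) < s := hs
          positivity
        have hval : (∫ s in Set.Ioi (0 : ℝ), Real.exp (-ν * s) * (s ^ (r - 1) / Real.Gamma r))
            = (1 / ν) ^ r := by
          rw [setIntegral_congr_fun measurableSet_Ioi
            (g := fun s : ℝ => (1 / Real.Gamma r) * (s ^ (r - 1) * Real.exp (-(ν * s))))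
            (fun s _ => by rw [neg_mul]; ring), integral_const_mul,
            Real.integral_rpow_mul_exp_neg_mul_Ioi hr0 hν0]
          field_simp [(Real.Gamma_pos_of_pos hr0).ne']
        have heq : (1 / ν : ℝ) ^ r = Real.exp (-(Real.log ν) * r) := by
          rw [Real.rpow_def_of_pos (by positivity), one_div, Real.log_inv]
        refine le_of_eq ?_
        rw [← heq, ← hval, ← ofReal_integral_eq_lintegral_ofReal hint hnn]
    _ = ENNReal.ofReal (∫ r in Set.Ioi (0 : ℝ), Real.exp (-(Real.log ν) * r)) := by
        rw [ofReal_integral_eq_lintegral_ofReal (exp_neg_integrableOn_Ioi 0 hlog)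
          (ae_of_all _ fun r => (Real.exp_pos _).le)]
    _ = ENNReal.ofReal (1 / Real.log ν) := by
        congr 1
        have h := Real.integral_rpow_mul_exp_neg_mul_Ioi one_pos hlog
        simp only [sub_self, Real.rpow_zero, one_mul, Real.rpow_one, Real.Gamma_one,
          mul_one] at h
        rw [← h]
        refine setIntegral_congr_fun measurableSet_Ioi fun r _ => ?_
        rw [neg_mul]

lemma lintegral_shift (k : ℝ → ℝ≥0∞) (τ : ℝ) :
    ∫⁻ t in Set.Ici τ, k (t - τ) = ∫⁻ s in Set.Ici (0 : ℝ), k s := by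
  have h : MeasurePreserving (fun s : ℝ => s + τ) volume volume :=
    measurePreserving_add_right volume τ
  have he : MeasurableEmbedding (fun s : ℝ => s + τ) :=
    (Homeomorph.addRight τ).measurableEmbedding
  have hpre : (fun s : ℝ => s + τ) ⁻¹' (Set.Ici τ) = Set.Ici (0 : ℝ) := by
    ext s; simp
  calc ∫⁻ t in Set.Ici τ, k (t - τ)
      = ∫⁻ s in (fun s : ℝ => s + τ) ⁻¹' (Set.Ici τ), k ((s + τ) - τ) :=
        (h.setLIntegral_comp_preimage_emb he (fun t => k (t - τ)) (Set.Ici τ)).symm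
    _ = ∫⁻ s in Set.Ici (0 : ℝ), k s := by rw [hpre]; simp

/-- If `ζ` is bounded and continuous on `[0,∞)` and `f` is continuous with
`∫₀^∞ e^{-νt}|f(t)| dt < ∞` for every `ν > 1`, then there is `ν > 1` such that the unique
continuous solution `q` of `q(t) + ∫₀^t 𝓘(t-τ) ζ(τ) q(τ) dτ = f(t)` satisfies
`∫₀^∞ e^{-νt}|q(t)| dt < ∞`. -/
theorem solution_laplace_transformable (ζ f : ℝ → ℂ)
    (hζc : ContinuousOn ζ (Set.Ici 0))
    (hζb : ∃ M : ℝ, ∀ t : ℝ, 0 ≤ t → ‖ζ t‖ ≤ M)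
    (hfc : ContinuousOn f (Set.Ici 0))
    (hfint : ∀ ν : ℝ, 1 < ν →
      (∫⁻ t in Set.Ioi (0 : ℝ),
        ENNReal.ofReal (Real.exp (-ν * t) * ‖f t‖)) < ⊤) :
    ∃ ν : ℝ, 1 < ν ∧
      ∀ q : ℝ → ℂ, ContinuousOn q (Set.Ici 0) →
        (∀ t : ℝ, 0 ≤ t →
          q t + ∫ τ in (0 : ℝ)..t, (volterraI (t - τ) : ℂ) * ζ τ * q τ = f t) →
        (∫⁻ t in Set.Ioi (0 : ℝ),
          ENNReal.ofReal (Real.exp (-ν * t) * ‖q t‖)) < ⊤ := by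
  obtain ⟨M, hM⟩ := hζb
  have hM0 : 0 ≤ M := le_trans (norm_nonneg _) (hM 0 le_rfl)
  set ν : ℝ := Real.exp (2 * (M + 1)) with hνdef
  have hν : 1 < ν := by
    have h := Real.add_one_le_exp (2 * (M + 1))
    rw [hνdef]
    nlinarith
  have hlogν : Real.log ν = 2 * (M + 1) := Real.log_exp _
  refine ⟨ν, hν, ?_⟩
  intro q hqc heq
  set C : ℝ≥0∞ := ENNReal.ofReal M with hCdef
  set Kb : ℝ≥0∞ := ENNReal.ofReal (1 / Real.log ν) with hKbdef
  have hKb : ∫⁻ s in Set.Ioi (0 : ℝ), ENNReal.ofReal (Real.exp (-ν * s) * volterraI s) ≤ Kb :=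
    lintegral_exp_volterra_le hν
  have hhalf : Kb * C ≤ ENNReal.ofReal (1 / 2) := by
    rw [hKbdef, hCdef, ← ENNReal.ofReal_mul (by rw [hlogν]; positivity)]
    apply ENNReal.ofReal_le_ofReal
    rw [hlogν, div_mul_eq_mul_div, one_mul, div_le_div_iff₀ (by positivity) (by norm_num)]
    nlinarith
  -- continuous extension of q
  set Q : ℝ → ℂ := fun τ => q (τ ⊔ 0) with hQdef
  have hQcont : Continuous Q :=
    hqc.comp_continuous (continuous_id.max continuous_const) fun x => le_max_right x 0
  have hQeq : ∀ τ : ℝ, 0 ≤ τ → Q τ = q τ := fun τ hτ => by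
    rw [hQdef]; simp only [sup_eq_left.mpr hτ]
  set G : ℝ → ℝ≥0∞ := fun τ => ENNReal.ofReal (Real.exp (-ν * τ) * ‖Q τ‖) with hGdef
  have hGr : Continuous fun τ : ℝ => Real.exp (-ν * τ) * ‖Q τ‖ :=
    (Real.continuous_exp.comp (continuous_const.mul continuous_id)).mul
      (continuous_norm.comp hQcont)
  have hGmeas : Measurable G := (ENNReal.continuous_ofReal.comp hGr).measurable
  have hGtop : ∀ τ, G τ ≠ ⊤ := fun τ => ENNReal.ofReal_ne_top
  set k : ℝ → ℝ≥0∞ := fun s => ENNReal.ofReal (Real.exp (-ν * s) * volterraI s) with hkdef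
  have hkmeas : Measurable k :=
    ((Real.measurable_exp.comp (measurable_id.const_mul (-ν))).mul
      measurable_volterraI).ennreal_ofReal
  set W : ℝ → ℝ → ℝ≥0∞ :=
    fun t τ => if 0 < τ ∧ τ ≤ t then k (t - τ) * C * G τ else 0 with hWdef
  have hWmeas : Measurable (Function.uncurry W) := by
    have h1 : Function.uncurry W = fun p : ℝ × ℝ =>
        Set.indicator {p : ℝ × ℝ | 0 < p.2 ∧ p.2 ≤ p.1}
          (fun p : ℝ × ℝ => k (p.1 - p.2) * C * G p.2) p := by
      funext p
      rw [Set.indicator_apply]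
      rfl
    rw [h1]
    refine Measurable.indicator ?_ ?_
    · exact ((hkmeas.comp (measurable_fst.sub measurable_snd)).mul_const C).mul
        (hGmeas.comp measurable_snd)
    · exact (measurableSet_lt measurable_const measurable_snd).inter
        (measurableSet_le measurable_snd measurable_fst)
  -- pointwise bound
  have hpt : ∀ t : ℝ, 0 ≤ t →
      G t ≤ ENNReal.ofReal (Real.exp (-ν * t) * ‖f t‖) + ∫⁻ τ, W t τ := by
    intro t ht
    set g : ℝ → ℂ := fun τ => (volterraI (t - τ) : ℂ) * ζ τ * q τ with hgdef
    have hqt : q t = f t - ∫ τ in (0 : ℝ)..t, g τ := eq_sub_of_add_eq (heq t ht)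
    have habs : ‖q t‖ ≤
        ‖f t‖ + ‖∫ τ in (0 : ℝ)..t, g τ‖ := by
      rw [hqt]
      exact norm_sub_le _ _
    have hRle : ‖∫ τ in (0 : ℝ)..t, g τ‖ ≤ ∫ τ in (0 : ℝ)..t, ‖g τ‖ := by
      have h1 := intervalIntegral.norm_integral_le_abs_integral_norm
        (f := g) (a := (0 : ℝ)) (b := t) (μ := volume)
      rw [abs_of_nonneg (intervalIntegral.integral_nonneg ht fun u _ => norm_nonneg _)] at h1
      exact h1
    have hIoc : (∫ τ in (0 : ℝ)..t, ‖g τ‖) = ∫ τ in Set.Ioc 0 t, ‖g τ‖ :=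
      intervalIntegral.integral_of_le ht
    calc G t = ENNReal.ofReal (Real.exp (-ν * t) * ‖q t‖) := by
          rw [hGdef]; dsimp only; rw [hQeq t ht]
      _ ≤ ENNReal.ofReal (Real.exp (-ν * t) * ‖f t‖
            + Real.exp (-ν * t) * ∫ τ in Set.Ioc 0 t, ‖g τ‖) := by
          apply ENNReal.ofReal_le_ofReal
          rw [← mul_add, ← hIoc]
          exact mul_le_mul_of_nonneg_left (habs.trans (by linarith)) (Real.exp_nonneg _)
      _ ≤ ENNReal.ofReal (Real.exp (-ν * t) * ‖f t‖)
            + ENNReal.ofReal (Real.exp (-ν * t) * ∫ τ in Set.Ioc 0 t, ‖g τ‖) :=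
          ENNReal.ofReal_add_le
      _ ≤ ENNReal.ofReal (Real.exp (-ν * t) * ‖f t‖) + ∫⁻ τ, W t τ := by
          refine add_le_add_right ?_ _
          calc ENNReal.ofReal (Real.exp (-ν * t) * ∫ τ in Set.Ioc 0 t, ‖g τ‖)
              = ENNReal.ofReal (Real.exp (-ν * t))
                  * ENNReal.ofReal (∫ τ in Set.Ioc 0 t, ‖g τ‖) :=
                ENNReal.ofReal_mul (Real.exp_nonneg _)
            _ ≤ ENNReal.ofReal (Real.exp (-ν * t))
                  * ∫⁻ τ in Set.Ioc 0 t, ENNReal.ofReal ‖g τ‖ :=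
                mul_le_mul_right (ofReal_integral_le _ _) _
            _ = ∫⁻ τ in Set.Ioc 0 t,
                  ENNReal.ofReal (Real.exp (-ν * t)) * ENNReal.ofReal ‖g τ‖ :=
                (lintegral_const_mul' _ _ ENNReal.ofReal_ne_top).symm
            _ ≤ ∫⁻ τ in Set.Ioc 0 t, k (t - τ) * C * G τ := by
                refine lintegral_mono_ae ?_
                filter_upwards [self_mem_ae_restrict measurableSet_Ioc] with τ hτ
                obtain ⟨hτ0, hτt⟩ := hτ
                have hVnn : 0 ≤ volterraI (t - τ) := volterraI_nonneg (by linarith)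
                have hnormg : ‖g τ‖
                    = volterraI (t - τ) * ‖ζ τ‖ * ‖q τ‖ := by
                  rw [hgdef]; dsimp only
                  rw [norm_mul, norm_mul, Complex.norm_real, Real.norm_eq_abs,
                    abs_of_nonneg hVnn]
                rw [← ENNReal.ofReal_mul (Real.exp_nonneg _), hnormg]
                have hexp : Real.exp (-ν * t) = Real.exp (-ν * (t - τ)) * Real.exp (-ν * τ) := by
                  rw [← Real.exp_add]; ring_nf
                have hle : Real.exp (-ν * t)
                      * (volterraI (t - τ) * ‖ζ τ‖ * ‖q τ‖)
                    ≤ (Real.exp (-ν * (t - τ)) * volterraI (t - τ)) * M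
                      * (Real.exp (-ν * τ) * ‖q τ‖) := by
                  have h2 : volterraI (t - τ) * ‖ζ τ‖ * ‖q τ‖
                      ≤ volterraI (t - τ) * M * ‖q τ‖ :=
                    mul_le_mul_of_nonneg_right
                      (mul_le_mul_of_nonneg_left (hM τ hτ0.le) hVnn)
                      (norm_nonneg _)
                  calc Real.exp (-ν * t)
                        * (volterraI (t - τ) * ‖ζ τ‖ * ‖q τ‖)
                      ≤ Real.exp (-ν * t) * (volterraI (t - τ) * M * ‖q τ‖) :=
                        mul_le_mul_of_nonneg_left h2 (Real.exp_nonneg _)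
                    _ = (Real.exp (-ν * (t - τ)) * volterraI (t - τ)) * M
                          * (Real.exp (-ν * τ) * ‖q τ‖) := by
                        rw [hexp]; ring
                refine le_trans (ENNReal.ofReal_le_ofReal hle) ?_
                rw [ENNReal.ofReal_mul (by positivity), ENNReal.ofReal_mul (by positivity)]
                rw [hkdef, hCdef, hGdef]
                dsimp only
                rw [hQeq τ hτ0.le]
            _ = ∫⁻ τ, W t τ := by
                rw [← lintegral_indicator measurableSet_Ioc]
                congr 1; funext τ
                rw [Set.indicator_apply, hWdef]
                simp only [Set.mem_Ioc]
  -- main estimate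
  set F : ℝ → ℝ≥0∞ := fun t => ENNReal.ofReal (Real.exp (-ν * t) * ‖f t‖) with hFdef
  set A := ∫⁻ t in Set.Ioi (0 : ℝ), F t with hAdef
  have hA : A < ⊤ := hfint ν hν
  have hWlin : Measurable fun t => ∫⁻ τ, W t τ := hWmeas.lintegral_prod_right'
  have hIfin : ∀ n : ℕ, (∫⁻ t in Set.Ioc (0 : ℝ) n, G t) < ⊤ := by
    intro n
    obtain ⟨B, hB⟩ := (isCompact_Icc (a := (0 : ℝ)) (b := (n : ℝ))).exists_bound_of_continuousOn
      hGr.continuousOn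
    calc ∫⁻ t in Set.Ioc (0 : ℝ) n, G t ≤ ∫⁻ _ in Set.Ioc (0 : ℝ) n, ENNReal.ofReal B := by
          refine lintegral_mono_ae ?_
          filter_upwards [self_mem_ae_restrict measurableSet_Ioc] with t ht
          exact ENNReal.ofReal_le_ofReal ((le_abs_self _).trans (hB t ⟨ht.1.le, ht.2⟩))
      _ = ENNReal.ofReal B * volume (Set.Ioc (0 : ℝ) n) := setLIntegral_const _ _
      _ < ⊤ := ENNReal.mul_lt_top ENNReal.ofReal_lt_top measure_Ioc_lt_top
  have hstep : ∀ n : ℕ, (∫⁻ t in Set.Ioc (0 : ℝ) n, G t)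
      ≤ A + ENNReal.ofReal (1 / 2) * ∫⁻ t in Set.Ioc (0 : ℝ) n, G t := by
    intro n
    calc ∫⁻ t in Set.Ioc (0 : ℝ) n, G t
        ≤ ∫⁻ t in Set.Ioc (0 : ℝ) n, (F t + ∫⁻ τ, W t τ) := by
          refine lintegral_mono_ae ?_
          filter_upwards [self_mem_ae_restrict measurableSet_Ioc] with t ht
          exact hpt t ht.1.le
      _ = (∫⁻ t in Set.Ioc (0 : ℝ) n, F t) + ∫⁻ t in Set.Ioc (0 : ℝ) n, ∫⁻ τ, W t τ :=
          lintegral_add_right _ hWlin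
      _ ≤ A + ENNReal.ofReal (1 / 2) * ∫⁻ t in Set.Ioc (0 : ℝ) n, G t := by
          refine add_le_add (lintegral_mono_set Set.Ioc_subset_Ioi_self) ?_
          calc ∫⁻ t in Set.Ioc (0 : ℝ) n, ∫⁻ τ, W t τ
              = ∫⁻ τ, ∫⁻ t in Set.Ioc (0 : ℝ) n, W t τ :=
                lintegral_lintegral_swap hWmeas.aemeasurable
            _ = ∫⁻ τ in Set.Ioc (0 : ℝ) n, ∫⁻ t in Set.Ioc (0 : ℝ) n, W t τ := by
                rw [← lintegral_indicator measurableSet_Ioc]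
                congr 1; funext τ
                rw [Set.indicator_apply]
                split_ifs with hτ
                · rfl
                · rw [setLIntegral_congr_fun measurableSet_Ioc
                    (fun t (htn : t ∈ Set.Ioc (0 : ℝ) n) => ?_), lintegral_zero]
                  rw [hWdef]
                  dsimp only
                  rw [if_neg]
                  rw [Set.mem_Ioc] at hτ
                  rintro ⟨h1, h2⟩
                  exact hτ ⟨h1, le_trans h2 htn.2⟩
            _ ≤ ∫⁻ τ in Set.Ioc (0 : ℝ) n, Kb * C * G τ := by
                refine lintegral_mono fun τ => ?_
                calc ∫⁻ t in Set.Ioc (0 : ℝ) n, W t τ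
                    ≤ ∫⁻ t in Set.Ioc (0 : ℝ) n,
                        Set.indicator (Set.Ici τ) (fun t => k (t - τ)) t * (C * G τ) := by
                      refine lintegral_mono fun t => ?_
                      rw [hWdef]
                      dsimp only
                      split_ifs with h
                      · rw [Set.indicator_of_mem (Set.mem_Ici.mpr h.2) (fun t => k (t - τ)), mul_assoc]
                      · exact zero_le
                  _ ≤ ∫⁻ t, Set.indicator (Set.Ici τ) (fun t => k (t - τ)) t * (C * G τ) :=
                      setLIntegral_le_lintegral _ _
                  _ = (∫⁻ t, Set.indicator (Set.Ici τ) (fun t => k (t - τ)) t) * (C * G τ) :=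
                      lintegral_mul_const' _ _
                        (ENNReal.mul_ne_top ENNReal.ofReal_ne_top (hGtop τ))
                  _ = (∫⁻ t in Set.Ici τ, k (t - τ)) * (C * G τ) := by
                      rw [lintegral_indicator measurableSet_Ici]
                  _ = (∫⁻ s in Set.Ici (0 : ℝ), k s) * (C * G τ) := by rw [lintegral_shift]
                  _ ≤ Kb * (C * G τ) := by
                      refine mul_le_mul_left ?_ _
                      rw [← restrict_Ioi_eq_restrict_Ici]
                      exact hKb
                  _ = Kb * C * G τ := by rw [mul_assoc]
            _ = Kb * C * ∫⁻ τ in Set.Ioc (0 : ℝ) n, G τ :=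
                lintegral_const_mul' _ _
                  (ENNReal.mul_ne_top ENNReal.ofReal_ne_top ENNReal.ofReal_ne_top)
            _ ≤ ENNReal.ofReal (1 / 2) * ∫⁻ t in Set.Ioc (0 : ℝ) n, G t :=
                mul_le_mul_left hhalf _
  have hbound : ∀ n : ℕ, (∫⁻ t in Set.Ioc (0 : ℝ) n, G t) ≤ A + A := by
    intro n
    have h1 := hstep n
    have h2 : ENNReal.ofReal (1 / 2 : ℝ) * (∫⁻ t in Set.Ioc (0 : ℝ) n, G t)
        = (∫⁻ t in Set.Ioc (0 : ℝ) n, G t) / 2 := by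
      have h4 : ENNReal.ofReal (1 / 2 : ℝ) = 2⁻¹ := by
        rw [one_div, ENNReal.ofReal_inv_of_pos two_pos]
        norm_num
      rw [h4, ENNReal.div_eq_inv_mul]
    rw [h2] at h1
    have h3 : (∫⁻ t in Set.Ioc (0 : ℝ) n, G t) - (∫⁻ t in Set.Ioc (0 : ℝ) n, G t) / 2 ≤ A :=
      tsub_le_iff_right.mpr h1
    rw [ENNReal.sub_half (hIfin n).ne] at h3
    calc (∫⁻ t in Set.Ioc (0 : ℝ) n, G t)
        = (∫⁻ t in Set.Ioc (0 : ℝ) n, G t) / 2 + (∫⁻ t in Set.Ioc (0 : ℝ) n, G t) / 2 :=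
          (ENNReal.add_halves _).symm
      _ ≤ A + A := add_le_add h3 h3
  have hGq : (∫⁻ t in Set.Ioi (0 : ℝ),
      ENNReal.ofReal (Real.exp (-ν * t) * ‖q t‖)) = ∫⁻ t in Set.Ioi (0 : ℝ), G t :=
    (setLIntegral_congr_fun measurableSet_Ioi (fun t ht => by
      rw [hGdef]; dsimp only; rw [hQeq t (le_of_lt ht)])).symm
  rw [hGq]
  have hunion : Set.Ioi (0 : ℝ) = ⋃ n : ℕ, Set.Ioc (0 : ℝ) n := by
    ext x
    simp only [Set.mem_Ioi, Set.mem_iUnion, Set.mem_Ioc]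
    constructor
    · intro hx
      obtain ⟨n, hn⟩ := exists_nat_ge x
      exact ⟨n, hx, hn⟩
    · rintro ⟨n, hn, -⟩
      exact hn
  have hwd : ∀ s : Set ℝ, MeasurableSet s →
      (∫⁻ t in s, G t) = volume.withDensity G s := fun s hs => (withDensity_apply G hs).symm
  rw [hwd _ measurableSet_Ioi, hunion]
  have hdir : Directed (· ⊆ ·) fun n : ℕ => Set.Ioc (0 : ℝ) (n : ℝ) := by
    refine Monotone.directed_le fun m n hmn => ?_
    exact Set.Ioc_subset_Ioc le_rfl (Nat.cast_le.mpr hmn)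
  rw [hdir.measure_iUnion]
  refine lt_of_le_of_lt (iSup_le fun n => ?_) (ENNReal.add_lt_top.mpr ⟨hA, hA⟩)
  rw [← hwd _ measurableSet_Ioc]
  exact hbound n
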